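/- Let Δ ∈ ℂ and let e₃, e₄, e₅ ∈ ℂ be nonzero and such that all denominators in the n=5 bound-pair Bethe equations are nonzero both at (e₃,e₄,e₅) and at (1/e₃, 1/e₄, 1/e₅). If (e₃,e₄,e₅) satisfies all three n=5 bound-pair Bethe equations, then (1/e₃, 1/e₄, 1/e₅) also satisfies all three equations. -/

import Mathlib

/-- The bound-pair Bethe equation for the unknown `x`, paired with `y` and `z`, in the
`n = 5` block of the zero-field six-vertex model with `N` columns. -/
def betheEq5 (N : ℕ) (Δ x y z : ℂ) : Prop :=
  x ^ (N - 1) =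
    ((1 - 2*Δ*x) / (x - 2*Δ)) * ((1 - 2*Δ*x + x*y) / (1 - 2*Δ*y + x*y)) *
      ((1 - 2*Δ*x + x*z) / (1 - 2*Δ*z + x*z))

lemma betheEq5_inv (N : ℕ) (Δ x y z : ℂ) (hx : x ≠ 0) (hy : y ≠ 0) (hz : z ≠ 0)
    (nx : 1 - 2*Δ*x ≠ 0) (nxy : 1 - 2*Δ*x + x*y ≠ 0) (nxz : 1 - 2*Δ*x + x*z ≠ 0)
    (dx' : 1/x - 2*Δ ≠ 0)
    (dxy' : 1 - 2*Δ*(1/y) + (1/x)*(1/y) ≠ 0)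
    (dxz' : 1 - 2*Δ*(1/z) + (1/x)*(1/z) ≠ 0)
    (h : betheEq5 N Δ x y z) : betheEq5 N Δ (1/x) (1/y) (1/z) := by
  unfold betheEq5 at h ⊢
  have f1 : (1 - 2*Δ*(1/x)) / ((1/x) - 2*Δ) = (x - 2*Δ) / (1 - 2*Δ*x) := by
    rw [div_eq_div_iff dx' nx]
    refine mul_right_cancel₀ hx ?_
    field_simp
  have f2 : (1 - 2*Δ*(1/x) + (1/x)*(1/y)) / (1 - 2*Δ*(1/y) + (1/x)*(1/y))
      = (1 - 2*Δ*y + x*y) / (1 - 2*Δ*x + x*y) := by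
    rw [div_eq_div_iff dxy' nxy]
    refine mul_right_cancel₀ (mul_ne_zero hx hy) ?_
    field_simp
    ring
  have f3 : (1 - 2*Δ*(1/x) + (1/x)*(1/z)) / (1 - 2*Δ*(1/z) + (1/x)*(1/z))
      = (1 - 2*Δ*z + x*z) / (1 - 2*Δ*x + x*z) := by
    rw [div_eq_div_iff dxz' nxz]
    refine mul_right_cancel₀ (mul_ne_zero hx hz) ?_
    field_simp
    ring
  rw [div_pow, one_pow, h, f1, f2, f3,
    one_div, mul_inv, mul_inv, inv_div, inv_div, inv_div]

/-- If `(e₃, e₄, e₅)` solves the three `n = 5` bound-pair Bethe equations (all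
denominators nonzero at `(e₃,e₄,e₅)` and at `(1/e₃, 1/e₄, 1/e₅)`), then so does
`(1/e₃, 1/e₄, 1/e₅)`. -/
theorem n5_bethe_inversion (N : ℕ) (hN : 0 < N) (hNeven : Even N) (Δ e₃ e₄ e₅ : ℂ)
    (h₃ : e₃ ≠ 0) (h₄ : e₄ ≠ 0) (h₅ : e₅ ≠ 0)
    (d₃ : e₃ - 2*Δ ≠ 0) (d₄ : e₄ - 2*Δ ≠ 0) (d₅ : e₅ - 2*Δ ≠ 0)
    (d₃₄ : 1 - 2*Δ*e₄ + e₃*e₄ ≠ 0) (d₄₃ : 1 - 2*Δ*e₃ + e₃*e₄ ≠ 0)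
    (d₃₅ : 1 - 2*Δ*e₅ + e₃*e₅ ≠ 0) (d₅₃ : 1 - 2*Δ*e₃ + e₃*e₅ ≠ 0)
    (d₄₅ : 1 - 2*Δ*e₅ + e₄*e₅ ≠ 0) (d₅₄ : 1 - 2*Δ*e₄ + e₄*e₅ ≠ 0)
    (d₃' : 1/e₃ - 2*Δ ≠ 0) (d₄' : 1/e₄ - 2*Δ ≠ 0) (d₅' : 1/e₅ - 2*Δ ≠ 0)
    (d₃₄' : 1 - 2*Δ*(1/e₄) + (1/e₃)*(1/e₄) ≠ 0) (d₄₃' : 1 - 2*Δ*(1/e₃) + (1/e₃)*(1/e₄) ≠ 0)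
    (d₃₅' : 1 - 2*Δ*(1/e₅) + (1/e₃)*(1/e₅) ≠ 0) (d₅₃' : 1 - 2*Δ*(1/e₃) + (1/e₃)*(1/e₅) ≠ 0)
    (d₄₅' : 1 - 2*Δ*(1/e₅) + (1/e₄)*(1/e₅) ≠ 0) (d₅₄' : 1 - 2*Δ*(1/e₄) + (1/e₄)*(1/e₅) ≠ 0)
    (heq₃ : betheEq5 N Δ e₃ e₄ e₅) (heq₄ : betheEq5 N Δ e₄ e₃ e₅)
    (heq₅ : betheEq5 N Δ e₅ e₃ e₄) :
    betheEq5 N Δ (1/e₃) (1/e₄) (1/e₅) ∧ betheEq5 N Δ (1/e₄) (1/e₃) (1/e₅) ∧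
      betheEq5 N Δ (1/e₅) (1/e₃) (1/e₄) := by
  have k3 : 1/e₃ - 2*Δ = (1 - 2*Δ*e₃)/e₃ := by field_simp
  have k4 : 1/e₄ - 2*Δ = (1 - 2*Δ*e₄)/e₄ := by field_simp
  have k5 : 1/e₅ - 2*Δ = (1 - 2*Δ*e₅)/e₅ := by field_simp
  have n₃ : 1 - 2*Δ*e₃ ≠ 0 := fun hc => d₃' (by rw [k3, hc, zero_div])
  have n₄ : 1 - 2*Δ*e₄ ≠ 0 := fun hc => d₄' (by rw [k4, hc, zero_div])
  have n₅ : 1 - 2*Δ*e₅ ≠ 0 := fun hc => d₅' (by rw [k5, hc, zero_div])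
  refine ⟨betheEq5_inv N Δ e₃ e₄ e₅ h₃ h₄ h₅ n₃ d₄₃ d₅₃ d₃' d₃₄' d₃₅' heq₃,
    betheEq5_inv N Δ e₄ e₃ e₅ h₄ h₃ h₅ n₄
      (fun hc => d₃₄ (by linear_combination hc)) d₅₄ d₄'
      (fun hc => d₄₃' (by linear_combination hc)) d₄₅' heq₄,
    betheEq5_inv N Δ e₅ e₃ e₄ h₅ h₃ h₄ n₅
      (fun hc => d₃₅ (by linear_combination hc))
      (fun hc => d₄₅ (by linear_combination hc)) d₅'
      (fun hc => d₅₃' (by linear_combination hc))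
      (fun hc => d₅₄' (by linear_combination hc)) heq₅⟩
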